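/- Let Ω, Σ, Ω' ⊂ ℝ^d = ℝ^{d−1} × ℝ be bounded measurable sets of positive Lebesgue measure. Assume that every F ∈ PW(Ω) admits a representation F(x,y) = G(x,y) + H(x,y)·sin(πy) for all (x,y) ∈ ℝ^{d−1} × ℝ, with some G ∈ PW(Σ) and H ∈ PW(Ω'). Let Λ₁ ⊂ ℝ^{d−1} × ℤ be a set of uniqueness for PW(Σ), and let Λ₂ ⊂ ℝ^d be a set of uniqueness for PW(Ω') such that no point (x,y) ∈ Λ₂ has integer last coordinate y. Then Λ₁ ∪ Λ₂ is a set of uniqueness for PW(Ω). -/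

import Mathlib

open MeasureTheory Complex
open scoped RealInnerProductSpace Pointwise

noncomputable section

/-- The Paley–Wiener space of a set `Ω ⊆ ℝ^{m} × ℝ`. -/
def PWprod {m : ℕ} (Ω : Set (EuclideanSpace ℝ (Fin m) × ℝ)) :
    Set (EuclideanSpace ℝ (Fin m) × ℝ → ℂ) :=
  {F | ∃ f : EuclideanSpace ℝ (Fin m) × ℝ → ℂ, MemLp f 2 (volume.restrict Ω) ∧
    ∀ t, F t = ∫ p in Ω,
      f p * Complex.exp (-(2 * Real.pi * Complex.I * (((⟪ t.1, p.1 ⟫ : ℝ) + t.2 * p.2 : ℝ) : ℂ)))}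

/-- `Λ` is a set of uniqueness for `PW(Ω)`, `Ω ⊆ ℝ^{m} × ℝ`. -/
def IsUniquenessSetProd {m : ℕ} (Λ Ω : Set (EuclideanSpace ℝ (Fin m) × ℝ)) : Prop :=
  ∀ F ∈ PWprod Ω, (∀ l ∈ Λ, F l = 0) → ∀ t, F t = 0

theorem union_uniqueness_set
    (m : ℕ) (Ω S Ω' : Set (EuclideanSpace ℝ (Fin m) × ℝ))
    (hΩ : Bornology.IsBounded Ω) (hΩm : MeasurableSet Ω) (hΩp : 0 < volume Ω)
    (hS : Bornology.IsBounded S) (hSm : MeasurableSet S) (hSp : 0 < volume S)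
    (hΩ' : Bornology.IsBounded Ω') (hΩ'm : MeasurableSet Ω') (hΩ'p : 0 < volume Ω')
    (hdec : ∀ F ∈ PWprod Ω, ∃ G ∈ PWprod S, ∃ H ∈ PWprod Ω',
      ∀ p : EuclideanSpace ℝ (Fin m) × ℝ,
        F p = G p + H p * ((Real.sin (Real.pi * p.2) : ℝ) : ℂ))
    (Λ₁ Λ₂ : Set (EuclideanSpace ℝ (Fin m) × ℝ))
    (hΛ₁int : ∀ p ∈ Λ₁, ∃ k : ℤ, p.2 = (k : ℝ))
    (hΛ₁ : IsUniquenessSetProd Λ₁ S)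
    (hΛ₂ : IsUniquenessSetProd Λ₂ Ω')
    (hΛ₂int : ∀ p ∈ Λ₂, ¬ ∃ k : ℤ, p.2 = (k : ℝ)) :
    IsUniquenessSetProd (Λ₁ ∪ Λ₂) Ω := by
  intro F hF hFz t
  obtain ⟨G, hG, H, hH, hdecF⟩ := hdec F hF
  -- sin(π y) = 0 for integer y
  have hsin0 : ∀ p : EuclideanSpace ℝ (Fin m) × ℝ, (∃ k : ℤ, p.2 = (k : ℝ)) →
      Real.sin (Real.pi * p.2) = 0 := by
    rintro p ⟨k, hk⟩
    rw [hk, mul_comm]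
    exact Real.sin_int_mul_pi k
  -- G vanishes on Λ₁
  have hG0 : ∀ t, G t = 0 := by
    apply hΛ₁ G hG
    intro l hl
    have := hFz l (Or.inl hl)
    have hs := hsin0 l (hΛ₁int l hl)
    rw [hdecF l, hs] at this
    simpa using this
  -- H vanishes on Λ₂
  have hH0 : ∀ t, H t = 0 := by
    apply hΛ₂ H hH
    intro l hl
    have hFl := hFz l (Or.inr hl)
    rw [hdecF l, hG0 l, zero_add] at hFl
    have hsne : Real.sin (Real.pi * l.2) ≠ 0 := by
      intro h
      apply hΛ₂int l hl
      rw [mul_comm] at h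
      obtain ⟨k, hk⟩ := (Real.sin_eq_zero_iff).mp h
      exact ⟨k, by
        have : l.2 * Real.pi = k * Real.pi := by linarith [hk]
        have := mul_right_cancel₀ Real.pi_ne_zero this
        exact this⟩
    have : (Real.sin (Real.pi * l.2) : ℂ) ≠ 0 := by
      exact_mod_cast Complex.ofReal_ne_zero.mpr hsne
    exact (mul_eq_zero.mp hFl).resolve_right this
  rw [hdecF t, hG0 t, hH0 t, zero_add, zero_mul]
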